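/- arXiv:2112.05453 — 3 statements merged into one kernel-verified Lean document; each statement's English description precedes it below -/
import Mathlib

section
/- Let A ∈ su(n,1). Then Q·A·Q = −A if and only if there exist a, b ∈ ℝ and v ∈ ℂ^{n−1} such that A has the block form [[0, v, −v], [vᴴ, a, ib], [−vᴴ, −ib, −a]]; and Q·A·Q = A if and only if there exist a skew-Hermitian B ∈ M_{n−1}(ℂ), v ∈ ℂ^{n−1} and a, b ∈ ℝ with 2i(a+b) + trace(B) = 0 such that A has the block form [[B, v, v], [−vᴴ, i(a+b), i(a−b)], [−vᴴ, i(a−b), i(a+b)]] (blocks of sizes n−1, 1, 1). -/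
open Matrix Complex

/-- The second Hermitian form matrix `Q = diag(Id_{n-1}, [[0,1],[1,0]])` on `ℂ^{n+1}`,
with the index set split into blocks of sizes `n-1, 1, 1`. -/
noncomputable def Qmat (n : ℕ) : Matrix (Fin (n-1) ⊕ Fin 2) (Fin (n-1) ⊕ Fin 2) ℂ :=
  Matrix.fromBlocks 1 0 0 !![0, 1; 1, 0]

def sg (n : ℕ) : (Fin (n-1) ⊕ Fin 2) → (Fin (n-1) ⊕ Fin 2) := Sum.map id (· + 1)

lemma Qmul (n : ℕ) (M : Matrix (Fin (n-1) ⊕ Fin 2) (Fin (n-1) ⊕ Fin 2) ℂ) (x y) :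
    (Qmat n * M) x y = M (sg n x) y := by
  rcases x with i | i
  · simp [Qmat, sg, Matrix.mul_apply, Fintype.sum_sum_type, Matrix.fromBlocks,
      Matrix.one_apply]
  · fin_cases i <;>
      simp [Qmat, sg, Matrix.mul_apply, Fintype.sum_sum_type, Matrix.fromBlocks,
        Fin.sum_univ_two]

lemma mulQ (n : ℕ) (M : Matrix (Fin (n-1) ⊕ Fin 2) (Fin (n-1) ⊕ Fin 2) ℂ) (x y) :
    (M * Qmat n) x y = M x (sg n y) := by
  rcases y with j | j
  · simp [Qmat, sg, Matrix.mul_apply, Fintype.sum_sum_type, Matrix.fromBlocks,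
      Matrix.one_apply]
  · fin_cases j <;>
      simp [Qmat, sg, Matrix.mul_apply, Fintype.sum_sum_type, Matrix.fromBlocks,
        Fin.sum_univ_two]

lemma star_eq_neg' (z : ℂ) (h : star z = -z) : z = Complex.I * (z.im : ℂ) := by
  have h2 : z.re = -z.re := by simpa using congrArg Complex.re h
  apply Complex.ext <;> simp <;> linarith

lemma star_eq_self' (z : ℂ) (h : star z = z) : z = (z.re : ℂ) := by
  have h2 : -z.im = z.im := by simpa using congrArg Complex.im h
  apply Complex.ext <;> simp <;> linarith

/-- For `A ∈ su(n,1)`: the `(−1)`-eigenspace of the Cartan involution `A ↦ QAQ`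
consists of the matrices `[[0, v, −v], [vᴴ, a, ib], [−vᴴ, −ib, −a]]`, and the
`(+1)`-eigenspace consists of the matrices
`[[B, v, v], [−vᴴ, i(a+b), i(a−b)], [−vᴴ, i(a−b), i(a+b)]]`
with `B` skew-Hermitian and `2i(a+b) + tr B = 0`. -/
theorem stmt2 (n : ℕ) (hn : 2 ≤ n) (A : Matrix (Fin (n-1) ⊕ Fin 2) (Fin (n-1) ⊕ Fin 2) ℂ)
    (hA : Aᴴ * Qmat n + Qmat n * A = 0) (htr : A.trace = 0) :
    ((Qmat n * A * Qmat n = -A ↔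
      ∃ (a b : ℝ) (v : Fin (n-1) → ℂ),
        A = Matrix.fromBlocks 0
              (Matrix.of fun i j => ![v i, -v i] j)
              (Matrix.of fun j i => ![star (v i), -star (v i)] j)
              !![(a : ℂ), Complex.I * (b : ℂ); -(Complex.I * (b : ℂ)), -(a : ℂ)]) ∧
     (Qmat n * A * Qmat n = A ↔
      ∃ (B : Matrix (Fin (n-1)) (Fin (n-1)) ℂ) (v : Fin (n-1) → ℂ) (a b : ℝ),
        Bᴴ = -B ∧ 2 * Complex.I * ((a : ℂ) + (b : ℂ)) + B.trace = 0 ∧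
        A = Matrix.fromBlocks B
              (Matrix.of fun i j => ![v i, v i] j)
              (Matrix.of fun j i => ![-star (v i), -star (v i)] j)
              !![Complex.I * ((a : ℂ) + (b : ℂ)), Complex.I * ((a : ℂ) - (b : ℂ));
                 Complex.I * ((a : ℂ) - (b : ℂ)), Complex.I * ((a : ℂ) + (b : ℂ))])) := by
  have hA' : ∀ x y, star (A (sg n y) x) + A (sg n x) y = 0 := by
    intro x y
    have h := congrFun (congrFun hA x) y
    rw [Matrix.add_apply, mulQ, Qmul, Matrix.conjTranspose_apply] at h
    simpa using h
  have hQAQ : ∀ x y, (Qmat n * A * Qmat n) x y = A (sg n x) (sg n y) := by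
    intro x y; rw [mulQ, Qmul]
  have hs0 : sg n (Sum.inr 0) = Sum.inr 1 := by simp [sg]
  have hs1 : sg n (Sum.inr 1) = Sum.inr 0 := by simp [sg]
  have hsl : ∀ i : Fin (n-1), sg n (Sum.inl i) = Sum.inl i := fun i => rfl
  have hP : ∀ r : Fin 2, r = 0 ∨ r = 1 := by decide
  constructor
  · constructor
    · intro h
      have h' : ∀ x y, A (sg n x) (sg n y) = -A x y := by
        intro x y; rw [← hQAQ, h, Matrix.neg_apply]
      refine ⟨(A (Sum.inr 0) (Sum.inr 0)).re, (A (Sum.inr 0) (Sum.inr 1)).im,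
        fun i => A (Sum.inl i) (Sum.inr 0), ?_⟩
      have e11 : A (Sum.inr 1) (Sum.inr 1) = -A (Sum.inr 0) (Sum.inr 0) := by
        have := h' (Sum.inr 0) (Sum.inr 0); rwa [hs0] at this
      have e10 : A (Sum.inr 1) (Sum.inr 0) = -A (Sum.inr 0) (Sum.inr 1) := by
        have := h' (Sum.inr 0) (Sum.inr 1); rwa [hs0, hs1] at this
      have hreal : A (Sum.inr 0) (Sum.inr 0) = ((A (Sum.inr 0) (Sum.inr 0)).re : ℂ) := by
        apply star_eq_self'
        have := hA' (Sum.inr 0) (Sum.inr 1); rw [hs0, hs1] at this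
        rw [e11] at this
        linear_combination this
      have himag : A (Sum.inr 0) (Sum.inr 1) =
          Complex.I * ((A (Sum.inr 0) (Sum.inr 1)).im : ℂ) := by
        apply star_eq_neg'
        have := hA' (Sum.inr 1) (Sum.inr 1); rw [hs1] at this
        linear_combination this
      ext x y
      rcases x with i | p <;> rcases y with j | q
      · have := h' (Sum.inl i) (Sum.inl j); rw [hsl, hsl] at this
        show A (Sum.inl i) (Sum.inl j) = 0
        linear_combination this / 2
      · have := h' (Sum.inl i) (Sum.inr 0); rw [hsl, hs0] at this
        rcases hP q with rfl | rfl
        · rfl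
        · show A (Sum.inl i) (Sum.inr 1) = -A (Sum.inl i) (Sum.inr 0)
          exact this
      · have hx1 := hA' (Sum.inr 1) (Sum.inl j); rw [hsl, hs1] at hx1
        have hx0 := hA' (Sum.inr 0) (Sum.inl j); rw [hsl, hs0] at hx0
        have hv : A (Sum.inl j) (Sum.inr 1) = -A (Sum.inl j) (Sum.inr 0) := by
          have := h' (Sum.inl j) (Sum.inr 0); rwa [hsl, hs0] at this
        rw [hv, star_neg] at hx1
        rcases hP p with rfl | rfl
        · show A (Sum.inr 0) (Sum.inl j) = star (A (Sum.inl j) (Sum.inr 0))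
          linear_combination hx1
        · show A (Sum.inr 1) (Sum.inl j) = -star (A (Sum.inl j) (Sum.inr 0))
          linear_combination hx0
      · rcases hP p with rfl | rfl <;> rcases hP q with rfl | rfl
        · show A (Sum.inr 0) (Sum.inr 0) = ((A (Sum.inr 0) (Sum.inr 0)).re : ℂ)
          exact hreal
        · show A (Sum.inr 0) (Sum.inr 1) =
            Complex.I * ((A (Sum.inr 0) (Sum.inr 1)).im : ℂ)
          exact himag
        · show A (Sum.inr 1) (Sum.inr 0) =
            -(Complex.I * ((A (Sum.inr 0) (Sum.inr 1)).im : ℂ))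
          linear_combination e10 - himag
        · show A (Sum.inr 1) (Sum.inr 1) = -((A (Sum.inr 0) (Sum.inr 0)).re : ℂ)
          linear_combination e11 - hreal
    · rintro ⟨a, b, v, rfl⟩
      ext x y
      rw [hQAQ, Matrix.neg_apply]
      rcases x with i | p <;> rcases y with j | q
      · rw [hsl, hsl]; show (0 : ℂ) = -0; ring
      · rw [hsl]
        rcases hP q with rfl | rfl
        · rw [hs0]; show -v i = -(v i); ring
        · rw [hs1]; show v i = -(-v i); ring
      · rw [hsl]
        rcases hP p with rfl | rfl
        · rw [hs0]; show -star (v j) = -(star (v j)); ring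
        · rw [hs1]; show star (v j) = -(-star (v j)); ring
      · rcases hP p with rfl | rfl <;> rcases hP q with rfl | rfl
        · rw [hs0]; show -(a : ℂ) = -(a : ℂ); ring
        · rw [hs0, hs1]
          show -(Complex.I * (b : ℂ)) = -(Complex.I * (b : ℂ)); ring
        · rw [hs1, hs0]
          show Complex.I * (b : ℂ) = -(-(Complex.I * (b : ℂ))); ring
        · rw [hs1]; show (a : ℂ) = -(-(a : ℂ)); ring
  · constructor
    · intro h
      have h' : ∀ x y, A (sg n x) (sg n y) = A x y := by
        intro x y; rw [← hQAQ, h]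
      set c := (A (Sum.inr 0) (Sum.inr 0)).im with hc
      set d := (A (Sum.inr 0) (Sum.inr 1)).im with hd
      have e11 : A (Sum.inr 1) (Sum.inr 1) = A (Sum.inr 0) (Sum.inr 0) := by
        have := h' (Sum.inr 0) (Sum.inr 0); rwa [hs0] at this
      have e10 : A (Sum.inr 1) (Sum.inr 0) = A (Sum.inr 0) (Sum.inr 1) := by
        have := h' (Sum.inr 0) (Sum.inr 1); rwa [hs0, hs1] at this
      have h00 : A (Sum.inr 0) (Sum.inr 0) = Complex.I * (c : ℂ) := by
        apply star_eq_neg'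
        have := hA' (Sum.inr 0) (Sum.inr 1); rw [hs0, hs1] at this
        rw [e11] at this
        linear_combination this
      have h01 : A (Sum.inr 0) (Sum.inr 1) = Complex.I * (d : ℂ) := by
        apply star_eq_neg'
        have := hA' (Sum.inr 1) (Sum.inr 1); rw [hs1] at this
        linear_combination this
      have hca : ((((c+d)/2 : ℝ) : ℂ) + (((c-d)/2 : ℝ) : ℂ)) = (c : ℂ) := by
        push_cast; ring
      have hcb : ((((c+d)/2 : ℝ) : ℂ) - (((c-d)/2 : ℝ) : ℂ)) = (d : ℂ) := by
        push_cast; ring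
      refine ⟨Matrix.of fun i j => A (Sum.inl i) (Sum.inl j),
        fun i => A (Sum.inl i) (Sum.inr 0), (c + d) / 2, (c - d) / 2, ?_, ?_, ?_⟩
      · ext i j
        have := hA' (Sum.inl i) (Sum.inl j); rw [hsl, hsl] at this
        simp only [Matrix.conjTranspose_apply, Matrix.neg_apply, Matrix.of_apply]
        linear_combination this
      · have htr' : (∑ i, A (Sum.inl i) (Sum.inl i)) + A (Sum.inr 0) (Sum.inr 0)
            + A (Sum.inr 1) (Sum.inr 1) = 0 := by
          rw [← htr]
          simp [Matrix.trace, Matrix.diag, Fintype.sum_sum_type, Fin.sum_univ_two]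
          ring
        have htrB : (Matrix.of fun i j => A (Sum.inl i) (Sum.inl j)).trace
            = ∑ i, A (Sum.inl i) (Sum.inl i) := by
          simp [Matrix.trace, Matrix.diag]
        rw [htrB]
        rw [e11, h00] at htr'
        linear_combination htr' + 2 * Complex.I * hca
      · ext x y
        rcases x with i | p <;> rcases y with j | q
        · rfl
        · have := h' (Sum.inl i) (Sum.inr 0); rw [hsl, hs0] at this
          rcases hP q with rfl | rfl
          · rfl
          · show A (Sum.inl i) (Sum.inr 1) = A (Sum.inl i) (Sum.inr 0)
            exact this
        · have hx1 := hA' (Sum.inr 1) (Sum.inl j); rw [hsl, hs1] at hx1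
          have hx0 := hA' (Sum.inr 0) (Sum.inl j); rw [hsl, hs0] at hx0
          have hv : A (Sum.inl j) (Sum.inr 1) = A (Sum.inl j) (Sum.inr 0) := by
            have := h' (Sum.inl j) (Sum.inr 0); rwa [hsl, hs0] at this
          rw [hv] at hx1
          rcases hP p with rfl | rfl
          · show A (Sum.inr 0) (Sum.inl j) = -star (A (Sum.inl j) (Sum.inr 0))
            linear_combination hx1
          · show A (Sum.inr 1) (Sum.inl j) = -star (A (Sum.inl j) (Sum.inr 0))
            linear_combination hx0
        · rcases hP p with rfl | rfl <;> rcases hP q with rfl | rfl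
          · show A (Sum.inr 0) (Sum.inr 0) =
              Complex.I * ((((c+d)/2 : ℝ) : ℂ) + (((c-d)/2 : ℝ) : ℂ))
            linear_combination h00 + Complex.I * hca.symm
          · show A (Sum.inr 0) (Sum.inr 1) =
              Complex.I * ((((c+d)/2 : ℝ) : ℂ) - (((c-d)/2 : ℝ) : ℂ))
            linear_combination h01 + Complex.I * hcb.symm
          · show A (Sum.inr 1) (Sum.inr 0) =
              Complex.I * ((((c+d)/2 : ℝ) : ℂ) - (((c-d)/2 : ℝ) : ℂ))
            linear_combination e10 + h01 + Complex.I * hcb.symm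
          · show A (Sum.inr 1) (Sum.inr 1) =
              Complex.I * ((((c+d)/2 : ℝ) : ℂ) + (((c-d)/2 : ℝ) : ℂ))
            linear_combination e11 + h00 + Complex.I * hca.symm
    · rintro ⟨B, v, a, b, hB, hBtr, rfl⟩
      ext x y
      rw [hQAQ]
      rcases x with i | p <;> rcases y with j | q
      · rw [hsl, hsl]
      · rw [hsl]
        rcases hP q with rfl | rfl
        · rw [hs0]; show v i = v i; ring
        · rw [hs1]; show v i = v i; ring
      · rw [hsl]
        rcases hP p with rfl | rfl
        · rw [hs0]; show -star (v j) = -star (v j); ring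
        · rw [hs1]; show -star (v j) = -star (v j); ring
      · rcases hP p with rfl | rfl <;> rcases hP q with rfl | rfl
        · rw [hs0]
          show Complex.I * ((a : ℂ) + (b : ℂ)) = Complex.I * ((a : ℂ) + (b : ℂ)); ring
        · rw [hs0, hs1]
          show Complex.I * ((a : ℂ) - (b : ℂ)) = Complex.I * ((a : ℂ) - (b : ℂ)); ring
        · rw [hs1, hs0]
          show Complex.I * ((a : ℂ) - (b : ℂ)) = Complex.I * ((a : ℂ) - (b : ℂ)); ring
        · rw [hs1]
          show Complex.I * ((a : ℂ) + (b : ℂ)) = Complex.I * ((a : ℂ) + (b : ℂ)); ring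
end

section
/- For every linear form φ ∈ V*, the trilinear form T(B,C,D) = φ(B)·⟨JC, D⟩ satisfies the identity T = S²_τ − S⁴_τ, where τ = (1/4)·(φ ∘ J); in particular T belongs to the subspace K₂(V) + K₄(V) of K(V) (this is the key step of Corollary 6.4, showing E₂ is of type K₂ + K₃ + K₄). -/
open scoped RealInnerProductSpace

/-- The `K₂(V)`-tensor with parameter `θ`. -/
noncomputable def S2 {V : Type*} [NormedAddCommGroup V] [InnerProductSpace ℝ V]
    (θ : V →ₗ[ℝ] ℝ) (J : V →ₗ[ℝ] V) (X Y Z : V) : ℝ :=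
  θ Z * ⟪X, Y⟫ - θ Y * ⟪X, Z⟫ + θ (J Z) * ⟪X, J Y⟫ - θ (J Y) * ⟪X, J Z⟫
    - 2 * θ (J X) * ⟪J Y, Z⟫

/-- The `K₄(V)`-tensor with parameter `θ`. -/
noncomputable def S4 {V : Type*} [NormedAddCommGroup V] [InnerProductSpace ℝ V]
    (θ : V →ₗ[ℝ] ℝ) (J : V →ₗ[ℝ] V) (X Y Z : V) : ℝ :=
  θ Z * ⟪X, Y⟫ - θ Y * ⟪X, Z⟫ + θ (J Z) * ⟪X, J Y⟫ - θ (J Y) * ⟪X, J Z⟫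
    + 2 * θ (J X) * ⟪J Y, Z⟫

/-- The tensor `T(B,C,D) = φ(B)⟨JC, D⟩` equals `S²_τ − S⁴_τ` with `τ = (1/4)(φ ∘ J)`;
in particular `T ∈ K₂(V) + K₄(V)` (key step of Corollary 6.4). -/
theorem stmt18 {V : Type*} [NormedAddCommGroup V] [InnerProductSpace ℝ V]
    (J : V →ₗ[ℝ] V) (hJ2 : ∀ x, J (J x) = -x)
    (hJiso : ∀ x y : V, ⟪J x, J y⟫ = ⟪x, y⟫)
    (φ : V →ₗ[ℝ] ℝ) :
    ∀ B C D : V,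
      φ B * ⟪J C, D⟫
        = S2 ((1/4 : ℝ) • (φ ∘ₗ J)) J B C D - S4 ((1/4 : ℝ) • (φ ∘ₗ J)) J B C D := by
  intro B C D
  simp only [S2, S4, LinearMap.smul_apply, LinearMap.comp_apply, smul_eq_mul, hJ2, map_neg]
  ring
end

section
/- Equip K(V) with the inner product ⟨S, S'⟩ = Σ_{i,j,k=1}^{2n} S(e_i, e_j, e_k)·S'(e_i, e_j, e_k) for an orthonormal basis {e₁,…,e_{2n}} of V. Then a tensor S ∈ K(V) is orthogonal to the kernel of c₁₂ (i.e. ⟨S, T⟩ = 0 for every T ∈ K(V) with c₁₂(T) = 0) if and only if there exists σ ∈ V* such that S(B,C,D) = ⟨B,C⟩σ(D) − ⟨B,D⟩σ(C) + ⟨B,JC⟩σ(JD) − ⟨B,JD⟩σ(JC) for all B, C, D ∈ V. -/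
open scoped RealInnerProductSpace

/-- A trilinear form on `V` belongs to `K(V)` if it is skew-symmetric in the last two
slots and invariant under `J` in the last two slots. -/
def memK {V : Type*} [NormedAddCommGroup V] [InnerProductSpace ℝ V]
    (J : V →ₗ[ℝ] V) (S : V →ₗ[ℝ] V →ₗ[ℝ] V →ₗ[ℝ] ℝ) : Prop :=
  ∀ X Y Z : V, S X Y Z = -S X Z Y ∧ S X (J Y) (J Z) = S X Y Z

section auxlemmas

variable {V : Type*} [NormedAddCommGroup V] [InnerProductSpace ℝ V]
variable {ι : Type*} [Fintype ι]

private lemma expand_fun (e : OrthonormalBasis ι ℝ V) (f : V →ₗ[ℝ] ℝ) (x : V) :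
    f x = ∑ i, ⟪e i, x⟫ * f (e i) := by
  conv_lhs => rw [← e.sum_repr x]
  simp [e.repr_apply_apply]

private lemma expand_first (e : OrthonormalBasis ι ℝ V)
    (T : V →ₗ[ℝ] V →ₗ[ℝ] V →ₗ[ℝ] ℝ) (x y z : V) :
    T x y z = ∑ i, ⟪e i, x⟫ * T (e i) y z := by
  conv_lhs => rw [← e.sum_repr x]
  simp [e.repr_apply_apply]

private lemma expand_second (e : OrthonormalBasis ι ℝ V)
    (T : V →ₗ[ℝ] V →ₗ[ℝ] V →ₗ[ℝ] ℝ) (x y z : V) :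
    T x y z = ∑ i, ⟪e i, y⟫ * T x (e i) z := by
  conv_lhs => rw [← e.sum_repr y]
  simp [e.repr_apply_apply]

private lemma expand_third (e : OrthonormalBasis ι ℝ V)
    (T : V →ₗ[ℝ] V →ₗ[ℝ] V →ₗ[ℝ] ℝ) (x y z : V) :
    T x y z = ∑ i, ⟪e i, z⟫ * T x y (e i) := by
  conv_lhs => rw [← e.sum_repr z]
  simp [e.repr_apply_apply]

private lemma inner_J_right {J : V →ₗ[ℝ] V} (hJ2 : ∀ x, J (J x) = -x)
    (hJiso : ∀ x y : V, ⟪J x, J y⟫ = ⟪x, y⟫) (x y : V) :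
    ⟪x, J y⟫ = -⟪J x, y⟫ := by
  have := hJiso x (J y)
  rw [hJ2, inner_neg_right] at this
  linarith

private lemma inner_J_self {J : V →ₗ[ℝ] V} (hJ2 : ∀ x, J (J x) = -x)
    (hJiso : ∀ x y : V, ⟪J x, J y⟫ = ⟪x, y⟫) (x : V) :
    ⟪x, J x⟫ = 0 := by
  have h := inner_J_right hJ2 hJiso x x
  rw [real_inner_comm (J x) x] at h
  have h2 : ⟪J x, x⟫ = 0 := by linarith
  rw [real_inner_comm]; exact h2

private lemma trace_J {J : V →ₗ[ℝ] V} (hJ2 : ∀ x, J (J x) = -x)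
    (e : OrthonormalBasis ι ℝ V) (T : V →ₗ[ℝ] V →ₗ[ℝ] V →ₗ[ℝ] ℝ)
    (hT : ∀ X Y Z : V, T X Y Z = -T X Z Y ∧ T X (J Y) (J Z) = T X Y Z)
    (hT0 : ∀ Z : V, ∑ i, T (e i) (e i) Z = 0) (Z : V) :
    ∑ j, T (e j) (J (e j)) Z = 0 := by
  have h : ∀ j, T (e j) (J (e j)) Z = -(T (e j) (e j) (J Z)) := by
    intro j
    have h2 := (hT (e j) (e j) (-(J Z))).2
    have hz : J (-(J Z)) = Z := by rw [map_neg, hJ2, neg_neg]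
    rw [hz] at h2
    rw [h2]; exact map_neg _ _
  simp only [h]
  rw [Finset.sum_neg_distrib, hT0 (J Z), neg_zero]

private lemma trace_J' {J : V →ₗ[ℝ] V} (hJ2 : ∀ x, J (J x) = -x)
    (hJiso : ∀ x y : V, ⟪J x, J y⟫ = ⟪x, y⟫)
    (e : OrthonormalBasis ι ℝ V) (T : V →ₗ[ℝ] V →ₗ[ℝ] V →ₗ[ℝ] ℝ)
    (hT : ∀ X Y Z : V, T X Y Z = -T X Z Y ∧ T X (J Y) (J Z) = T X Y Z)
    (hT0 : ∀ Z : V, ∑ i, T (e i) (e i) Z = 0) (Z : V) :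
    ∑ j, T (J (e j)) (e j) Z = 0 := by
  classical
  have key : ∑ j, T (J (e j)) (J (J (e j))) Z = ∑ i, T (e i) (J (e i)) Z := by
    have step : ∀ j, T (J (e j)) (J (J (e j))) Z
        = ∑ i, ∑ k, ⟪e i, J (e j)⟫ * (⟪e k, J (e j)⟫ * T (e i) (J (e k)) Z) := by
      intro j
      rw [expand_first e T]
      refine Finset.sum_congr rfl fun i _ => ?_
      have hx : J (J (e j)) = ∑ k, ⟪e k, J (e j)⟫ • J (e k) := by
        conv_lhs => rw [← e.sum_repr (J (e j))]
        simp [e.repr_apply_apply]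
      rw [hx]
      simp [Finset.mul_sum]
    calc ∑ j, T (J (e j)) (J (J (e j))) Z
        = ∑ j, ∑ i, ∑ k, ⟪e i, J (e j)⟫ * (⟪e k, J (e j)⟫ * T (e i) (J (e k)) Z) := by
          exact Finset.sum_congr rfl fun j _ => step j
      _ = ∑ i, ∑ k, (∑ j, ⟪e i, J (e j)⟫ * ⟪e k, J (e j)⟫) * T (e i) (J (e k)) Z := by
          rw [Finset.sum_comm]
          refine Finset.sum_congr rfl fun i _ => ?_
          rw [Finset.sum_comm]
          refine Finset.sum_congr rfl fun k _ => ?_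
          rw [Finset.sum_mul]
          exact Finset.sum_congr rfl fun j _ => by ring
      _ = ∑ i, ∑ k, ⟪e i, e k⟫ * T (e i) (J (e k)) Z := by
          refine Finset.sum_congr rfl fun i _ => Finset.sum_congr rfl fun k _ => ?_
          congr 1
          have hterm : ∀ j, ⟪e i, J (e j)⟫ * ⟪e k, J (e j)⟫
              = ⟪J (e i), e j⟫ * ⟪e j, J (e k)⟫ := by
            intro j
            rw [inner_J_right hJ2 hJiso (e i) (e j), inner_J_right hJ2 hJiso (e k) (e j),
              real_inner_comm (J (e k)) (e j)]
            ring
          simp only [hterm]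
          rw [e.sum_inner_mul_inner, hJiso]
      _ = ∑ i, T (e i) (J (e i)) Z := by
          refine Finset.sum_congr rfl fun i _ => ?_
          simp [orthonormal_iff_ite.mp e.orthonormal]
  have h : ∀ j, T (J (e j)) (J (J (e j))) Z = -(T (J (e j)) (e j) Z) := by
    intro j
    rw [hJ2 (e j), map_neg, LinearMap.neg_apply]
  have h2 : ∀ j, T (J (e j)) (e j) Z = -(T (J (e j)) (J (J (e j))) Z) :=
    fun j => by rw [h j, neg_neg]
  simp only [h2]
  rw [Finset.sum_neg_distrib, key, trace_J hJ2 e T hT hT0 Z, neg_zero]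

private lemma key_orth {J : V →ₗ[ℝ] V} (hJ2 : ∀ x, J (J x) = -x)
    (hJiso : ∀ x y : V, ⟪J x, J y⟫ = ⟪x, y⟫)
    (e : OrthonormalBasis ι ℝ V) (σ : V →ₗ[ℝ] ℝ)
    (T : V →ₗ[ℝ] V →ₗ[ℝ] V →ₗ[ℝ] ℝ)
    (hT : ∀ X Y Z : V, T X Y Z = -T X Z Y ∧ T X (J Y) (J Z) = T X Y Z)
    (hT0 : ∀ Z : V, ∑ i, T (e i) (e i) Z = 0) :
    ∑ i, ∑ j, ∑ k, (⟪e i, e j⟫ * σ (e k) - ⟪e i, e k⟫ * σ (e j)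
      + ⟪e i, J (e j)⟫ * σ (J (e k)) - ⟪e i, J (e k)⟫ * σ (J (e j)))
      * T (e i) (e j) (e k) = 0 := by
  classical
  have split : ∀ i j k : ι, (⟪e i, e j⟫ * σ (e k) - ⟪e i, e k⟫ * σ (e j)
      + ⟪e i, J (e j)⟫ * σ (J (e k)) - ⟪e i, J (e k)⟫ * σ (J (e j)))
      * T (e i) (e j) (e k)
      = ⟪e i, e j⟫ * σ (e k) * T (e i) (e j) (e k)
        - ⟪e i, e k⟫ * σ (e j) * T (e i) (e j) (e k)
        + ⟪e i, J (e j)⟫ * σ (J (e k)) * T (e i) (e j) (e k)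
        - ⟪e i, J (e k)⟫ * σ (J (e j)) * T (e i) (e j) (e k) := fun i j k => by ring
  simp only [split, Finset.sum_add_distrib, Finset.sum_sub_distrib]
  have hA : ∑ i, ∑ j, ∑ k, ⟪e i, e j⟫ * σ (e k) * T (e i) (e j) (e k) = 0 := by
    have hij : ∀ i, ∑ j, ∑ k, ⟪e i, e j⟫ * σ (e k) * T (e i) (e j) (e k)
        = ∑ k, σ (e k) * T (e i) (e i) (e k) := by
      intro i
      rw [Finset.sum_comm]
      refine Finset.sum_congr rfl fun k _ => ?_
      conv_rhs => rw [expand_second e T (e i) (e i) (e k), Finset.mul_sum]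
      refine Finset.sum_congr rfl fun j _ => ?_
      rw [real_inner_comm (e j) (e i)]
      ring
    simp only [hij]
    rw [Finset.sum_comm]
    refine Finset.sum_eq_zero fun k _ => ?_
    rw [← Finset.mul_sum, hT0 (e k), mul_zero]
  have hB : ∑ i, ∑ j, ∑ k, ⟪e i, e k⟫ * σ (e j) * T (e i) (e j) (e k) = 0 := by
    have hij : ∀ i, ∑ j, ∑ k, ⟪e i, e k⟫ * σ (e j) * T (e i) (e j) (e k)
        = ∑ j, σ (e j) * T (e i) (e j) (e i) := by
      intro i
      refine Finset.sum_congr rfl fun j _ => ?_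
      conv_rhs => rw [expand_third e T (e i) (e j) (e i), Finset.mul_sum]
      refine Finset.sum_congr rfl fun k _ => ?_
      rw [real_inner_comm (e k) (e i)]
      ring
    simp only [hij]
    have hskew : ∀ i j : ι, T (e i) (e j) (e i) = -T (e i) (e i) (e j) :=
      fun i j => (hT _ _ _).1
    simp only [hskew, mul_neg]
    rw [Finset.sum_comm]
    refine Finset.sum_eq_zero fun j _ => ?_
    rw [Finset.sum_neg_distrib, ← Finset.mul_sum, hT0 (e j), mul_zero, neg_zero]
  have hC : ∑ i, ∑ j, ∑ k, ⟪e i, J (e j)⟫ * σ (J (e k)) * T (e i) (e j) (e k) = 0 := by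
    rw [Finset.sum_comm]
    have hj : ∀ j, ∑ i, ∑ k, ⟪e i, J (e j)⟫ * σ (J (e k)) * T (e i) (e j) (e k)
        = ∑ k, σ (J (e k)) * T (J (e j)) (e j) (e k) := by
      intro j
      rw [Finset.sum_comm]
      refine Finset.sum_congr rfl fun k _ => ?_
      conv_rhs => rw [expand_first e T (J (e j)) (e j) (e k), Finset.mul_sum]
      refine Finset.sum_congr rfl fun i _ => ?_
      ring
    simp only [hj]
    rw [Finset.sum_comm]
    refine Finset.sum_eq_zero fun k _ => ?_
    rw [← Finset.mul_sum, trace_J' hJ2 hJiso e T hT hT0 (e k), mul_zero]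
  have hD : ∑ i, ∑ j, ∑ k, ⟪e i, J (e k)⟫ * σ (J (e j)) * T (e i) (e j) (e k) = 0 := by
    rw [Finset.sum_comm]
    have hj : ∀ j, ∑ i, ∑ k, ⟪e i, J (e k)⟫ * σ (J (e j)) * T (e i) (e j) (e k)
        = σ (J (e j)) * ∑ k, T (J (e k)) (e j) (e k) := by
      intro j
      rw [Finset.sum_comm, Finset.mul_sum]
      refine Finset.sum_congr rfl fun k _ => ?_
      conv_rhs => rw [expand_first e T (J (e k)) (e j) (e k), Finset.mul_sum]
      refine Finset.sum_congr rfl fun i _ => ?_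
      ring
    simp only [hj]
    refine Finset.sum_eq_zero fun j _ => ?_
    have hz : ∑ k, T (J (e k)) (e j) (e k) = 0 := by
      have hsk : ∀ k : ι, T (J (e k)) (e j) (e k) = -T (J (e k)) (e k) (e j) :=
        fun k => (hT _ _ _).1
      simp only [hsk]
      rw [Finset.sum_neg_distrib, trace_J' hJ2 hJiso e T hT hT0 (e j), neg_zero]
    rw [hz, mul_zero]
  rw [hA, hB, hC, hD]
  ring

private noncomputable def Qform (J : V →ₗ[ℝ] V) (σ : V →ₗ[ℝ] ℝ) : V →ₗ[ℝ] V →ₗ[ℝ] V →ₗ[ℝ] ℝ :=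
  LinearMap.mk₂ ℝ
    (fun B C => ⟪B, C⟫ • σ - σ C • innerₗ V B + ⟪B, J C⟫ • (σ ∘ₗ J)
      - σ (J C) • (innerₗ V B ∘ₗ J))
    (fun B B' C => by
      ext D
      simp [inner_add_left, innerₗ_apply_apply]
      ring)
    (fun c B C => by
      ext D
      simp [real_inner_smul_left, innerₗ_apply_apply]
      ring)
    (fun B C C' => by
      ext D
      simp [inner_add_right, innerₗ_apply_apply]
      ring)
    (fun c B C => by
      ext D
      simp [real_inner_smul_right, innerₗ_apply_apply]
      ring)

private lemma Qform_apply (J : V →ₗ[ℝ] V) (σ : V →ₗ[ℝ] ℝ) (B C D : V) :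
    Qform J σ B C D = ⟪B, C⟫ * σ D - ⟪B, D⟫ * σ C + ⟪B, J C⟫ * σ (J D)
      - ⟪B, J D⟫ * σ (J C) := by
  simp only [Qform, LinearMap.mk₂_apply, LinearMap.sub_apply, LinearMap.add_apply,
    LinearMap.smul_apply, LinearMap.comp_apply, innerₗ_apply_apply,
    smul_eq_mul]
  ring

end auxlemmas

/-- A tensor `S ∈ K(V)` is orthogonal (w.r.t. the inner product
`⟨S,S'⟩ = Σ_{i,j,k} S(eᵢ,eⱼ,e_k)S'(eᵢ,eⱼ,e_k)`) to the kernel of the contraction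
`c₁₂` iff `S(B,C,D) = ⟨B,C⟩σ(D) − ⟨B,D⟩σ(C) + ⟨B,JC⟩σ(JD) − ⟨B,JD⟩σ(JC)` for some
`σ ∈ V*`. -/
theorem stmt19 {V : Type*} [NormedAddCommGroup V] [InnerProductSpace ℝ V]
    {n : ℕ} (J : V →ₗ[ℝ] V) (hJ2 : ∀ x, J (J x) = -x)
    (hJiso : ∀ x y : V, ⟪J x, J y⟫ = ⟪x, y⟫)
    (e : OrthonormalBasis (Fin (2*n)) ℝ V)
    (S : V →ₗ[ℝ] V →ₗ[ℝ] V →ₗ[ℝ] ℝ) (hS : memK J S) :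
    (∀ T : V →ₗ[ℝ] V →ₗ[ℝ] V →ₗ[ℝ] ℝ, memK J T →
        (∀ Z : V, ∑ i, T (e i) (e i) Z = 0) →
        ∑ i, ∑ j, ∑ k, S (e i) (e j) (e k) * T (e i) (e j) (e k) = 0)
    ↔ ∃ σ : V →ₗ[ℝ] ℝ, ∀ B C D : V,
        S B C D = ⟪B, C⟫ * σ D - ⟪B, D⟫ * σ C + ⟪B, J C⟫ * σ (J D) - ⟪B, J D⟫ * σ (J C) := by
  constructor
  · intro H
    by_cases hn : n = 0
    · subst hn
      have hV : ∀ x : V, x = 0 := by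
        intro x
        have h := e.sum_repr x
        simpa using h.symm
      refine ⟨0, fun B C D => ?_⟩
      rw [hV B]
      simp
    · set σ : V →ₗ[ℝ] ℝ := (((2*n : ℕ) : ℝ))⁻¹ • (∑ i, S (e i) (e i)) with hσdef
      set Q := Qform J σ with hQdef
      have hQapp : ∀ B C D : V, Q B C D = ⟪B, C⟫ * σ D - ⟪B, D⟫ * σ C
          + ⟪B, J C⟫ * σ (J D) - ⟪B, J D⟫ * σ (J C) :=
        fun B C D => Qform_apply J σ B C D
      have hQK : memK J Q := by
        intro X Y Z
        constructor
        · rw [hQapp X Y Z, hQapp X Z Y]; ring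
        · rw [hQapp X (J Y) (J Z), hQapp X Y Z, hJ2 Y, hJ2 Z, inner_neg_right,
            inner_neg_right, map_neg, map_neg]
          ring
      have hσS : ∀ Z : V, σ Z = ((2*n:ℕ):ℝ)⁻¹ * ∑ i, S (e i) (e i) Z := by
        intro Z
        simp [hσdef]
      have hcQ : ∀ Z : V, ∑ i, Q (e i) (e i) Z = ((2*n:ℕ):ℝ) * σ Z := by
        intro Z
        have h1 : ∀ i, Q (e i) (e i) Z
            = σ Z - ⟪e i, Z⟫ * σ (e i) - ⟪e i, J Z⟫ * σ (J (e i)) := by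
          intro i
          rw [hQapp]
          rw [show ⟪e i, e i⟫ = (1:ℝ) from by
            have h := orthonormal_iff_ite.mp e.orthonormal i i
            simpa using h]
          rw [inner_J_self hJ2 hJiso (e i)]
          ring
        simp only [h1]
        rw [Finset.sum_sub_distrib, Finset.sum_sub_distrib, ← expand_fun e σ Z]
        have h3 : ∑ i, ⟪e i, J Z⟫ * σ (J (e i)) = -σ Z := by
          have h4 := expand_fun e (σ ∘ₗ J) (J Z)
          simp only [LinearMap.comp_apply] at h4
          rw [← h4, hJ2, map_neg]
        rw [h3, Finset.sum_const, Finset.card_univ, Fintype.card_fin, nsmul_eq_mul]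
        push_cast
        ring
      have hne : ((2*n:ℕ):ℝ) ≠ 0 := by
        exact_mod_cast (by omega : (2*n) ≠ 0)
      set T := S + (-1:ℝ) • Q with hTdef
      have hTapp : ∀ X Y Z : V, T X Y Z = S X Y Z - Q X Y Z := by
        intro X Y Z; simp [hTdef]; ring
      have hTK : memK J T := by
        intro X Y Z
        constructor
        · rw [hTapp, hTapp, (hS X Y Z).1, (hQK X Y Z).1]; ring
        · rw [hTapp, hTapp, (hS X Y Z).2, (hQK X Y Z).2]
      have hT0 : ∀ Z : V, ∑ i, T (e i) (e i) Z = 0 := by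
        intro Z
        simp only [hTapp]
        rw [Finset.sum_sub_distrib, hcQ Z, hσS Z, ← mul_assoc,
          mul_inv_cancel₀ hne, one_mul, sub_self]
      have hST := H T hTK hT0
      have hQT : ∑ i, ∑ j, ∑ k, Q (e i) (e j) (e k) * T (e i) (e j) (e k) = 0 := by
        simp only [hQapp]
        exact key_orth hJ2 hJiso e σ T hTK hT0
      have hTT : ∑ i, ∑ j, ∑ k, T (e i) (e j) (e k) * T (e i) (e j) (e k) = 0 := by
        have expand : ∀ i j k : Fin (2*n), T (e i) (e j) (e k) * T (e i) (e j) (e k)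
            = S (e i) (e j) (e k) * T (e i) (e j) (e k)
              - Q (e i) (e j) (e k) * T (e i) (e j) (e k) := by
          intro i j k; rw [hTapp]; ring
        simp only [expand, Finset.sum_sub_distrib]
        rw [hST, hQT, sub_self]
      have hcoord : ∀ i j k : Fin (2*n), T (e i) (e j) (e k) = 0 := by
        intro i j k
        have h1 : ∀ i j k : Fin (2*n),
            (0:ℝ) ≤ T (e i) (e j) (e k) * T (e i) (e j) (e k) :=
          fun i j k => mul_self_nonneg _
        have h2 := (Finset.sum_eq_zero_iff_of_nonneg
          (fun i _ => Finset.sum_nonneg fun j _ => Finset.sum_nonneg fun k _ => h1 i j k)).mp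
          hTT i (Finset.mem_univ i)
        have h3 := (Finset.sum_eq_zero_iff_of_nonneg
          (fun j _ => Finset.sum_nonneg fun k _ => h1 i j k)).mp h2 j (Finset.mem_univ j)
        have h4 := (Finset.sum_eq_zero_iff_of_nonneg
          (fun k _ => h1 i j k)).mp h3 k (Finset.mem_univ k)
        exact mul_self_eq_zero.mp h4
      have hTzero : ∀ B C D : V, T B C D = 0 := by
        intro B C D
        rw [expand_first e T B C D]
        refine Finset.sum_eq_zero fun i _ => ?_
        have hTi : T (e i) C D = 0 := by
          rw [expand_second e T (e i) C D]
          refine Finset.sum_eq_zero fun j _ => ?_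
          have hTij : T (e i) (e j) D = 0 := by
            rw [expand_third e T (e i) (e j) D]
            refine Finset.sum_eq_zero fun k _ => ?_
            rw [hcoord i j k, mul_zero]
          rw [hTij, mul_zero]
        rw [hTi, mul_zero]
      refine ⟨σ, fun B C D => ?_⟩
      have h5 := hTzero B C D
      rw [hTapp] at h5
      have h6 : S B C D = Q B C D := by linarith
      rw [h6, hQapp]
  · rintro ⟨σ, hσ⟩ T hTK hT0
    simp only [hσ]
    exact key_orth hJ2 hJiso e σ T hTK hT0
end
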